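/- arXiv:2307.05194 — 4 statements merged into one kernel-verified Lean document; each statement's English description precedes it below -/
import Mathlib

section
/- If a family of probability distributions P_D on Θ satisfies (ε, δ)-differential privacy (i.e., for all neighbouring D, D' and measurable A ⊆ Θ, P_D(A) ≤ e^ε P_{D'}(A) + δ), and Q_D is another family of distributions with total variation distance satisfying ∫|p_D(θ) - q_D(θ)|dθ ≤ γ for all D, then Q_D satisfies (ε, δ + (1 + e^ε)γ)-differential privacy. -/
open Real MeasureTheory

lemma setint_diff_le {Θ : Type*} [MeasurableSpace Θ] (μ : Measure Θ)
    (f g : Θ → ℝ) (hf : Integrable f μ) (hg : Integrable g μ)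
    (A : Set Θ) (hA : MeasurableSet A) :
    ∫ θ in A, f θ ∂μ ≤ ∫ θ in A, g θ ∂μ + ∫ θ, |g θ - f θ| ∂μ := by
  have hdiff : Integrable (fun θ => |g θ - f θ|) μ := (hg.sub hf).abs
  have h1 : ∫ θ in A, f θ ∂μ ≤ ∫ θ in A, (g θ + |g θ - f θ|) ∂μ := by
    apply setIntegral_mono_on (hf.integrableOn) ((hg.add hdiff).integrableOn) hA
    intro θ _
    show f θ ≤ g θ + |g θ - f θ|
    have := abs_sub_abs_le_abs_sub (f θ) (g θ)
    have h2 : f θ - g θ ≤ |f θ - g θ| := le_abs_self _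
    have h3 : |f θ - g θ| = |g θ - f θ| := abs_sub_comm _ _
    linarith
  have h2 : ∫ θ in A, (g θ + |g θ - f θ|) ∂μ
      = ∫ θ in A, g θ ∂μ + ∫ θ in A, |g θ - f θ| ∂μ :=
    integral_add hg.integrableOn hdiff.integrableOn
  have h3 : ∫ θ in A, |g θ - f θ| ∂μ ≤ ∫ θ, |g θ - f θ| ∂μ :=
    setIntegral_le_integral hdiff (Filter.Eventually.of_forall fun θ => abs_nonneg _)
  linarith

/-- If the family of distributions with densities `p D` is `(ε, δ)`-DP and the
family with densities `q D` is within total variation `γ` of it (`∫ |p_D - q_D| ≤ γ`),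
then the `q`-family is `(ε, δ + (1 + e^ε) γ)`-DP. -/
theorem approximate_sampling_preserves_DP {Θ I : Type*} [MeasurableSpace Θ]
    (μ : Measure Θ) (Nbr : I → I → Prop)
    (p q : I → Θ → ℝ) (ε δ γ : ℝ)
    (hp : ∀ D θ, 0 ≤ p D θ) (hq : ∀ D θ, 0 ≤ q D θ)
    (hDP : ∀ D D', Nbr D D' → ∀ A : Set Θ, MeasurableSet A →
      ∫ θ in A, p D θ ∂μ ≤ Real.exp ε * ∫ θ in A, p D' θ ∂μ + δ)
    (hTV : ∀ D, ∫ θ, |p D θ - q D θ| ∂μ ≤ γ)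
    (hIntp : ∀ D, Integrable (p D) μ) (hIntq : ∀ D, Integrable (q D) μ) :
    ∀ D D', Nbr D D' → ∀ A : Set Θ, MeasurableSet A →
      ∫ θ in A, q D θ ∂μ ≤ Real.exp ε * ∫ θ in A, q D' θ ∂μ + (δ + (1 + Real.exp ε) * γ) := by
  intro D D' hN A hA
  have h1 : ∫ θ in A, q D θ ∂μ ≤ ∫ θ in A, p D θ ∂μ + ∫ θ, |p D θ - q D θ| ∂μ :=
    setint_diff_le μ (q D) (p D) (hIntq D) (hIntp D) A hA
  have h2 := hDP D D' hN A hA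
  have h3 : ∫ θ in A, p D' θ ∂μ ≤ ∫ θ in A, q D' θ ∂μ + ∫ θ, |p D' θ - q D' θ| ∂μ := by
    have := setint_diff_le μ (p D') (q D') (hIntp D') (hIntq D') A hA
    simpa [abs_sub_comm] using this
  have hT1 := hTV D
  have hT2 := hTV D'
  have he : (0:ℝ) < Real.exp ε := Real.exp_pos ε
  nlinarith [mul_le_mul_of_nonneg_left h3 he.le, mul_le_mul_of_nonneg_left hT2 he.le]
end

section
/- For the logistic model f(y = 1; x, θ) = 1/(1 + exp(-m(x, θ))), where m is an arbitrary real-valued function of features and parameters, the likelihood values satisfy 0 < f(y; x, θ) < 1 for y ∈ {0,1}; consequently in a one-observation generalized posterior with β-divergence loss, the log-ratio of the unnormalized posterior under any two feature-label pairs is bounded by 1/(β − 1). -/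
open Real

lemma keyA {q f : ℝ} (hq : 0 < q) (hf : 0 < f) (hf1 : f < 1) :
    f ^ q * (1 + q * (1 - f)) ≤ 1 := by
  have hx : 0 < 1 + q * (1 - f) := by nlinarith
  have h1 : Real.log f ≤ f - 1 := Real.log_le_sub_one_of_pos hf
  have h2 : Real.log (1 + q * (1 - f)) ≤ q * (1 - f) := by
    have := Real.log_le_sub_one_of_pos hx; linarith
  have hrw : f ^ q * (1 + q * (1 - f)) =
      Real.exp (q * Real.log f + Real.log (1 + q * (1 - f))) := by
    rw [Real.exp_add, Real.rpow_def_of_pos hf, Real.exp_log hx, mul_comm (Real.log f) q]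
  rw [hrw]
  calc Real.exp (q * Real.log f + Real.log (1 + q * (1 - f)))
      ≤ Real.exp (q * (f - 1) + q * (1 - f)) := by
        apply Real.exp_le_exp.mpr
        have := mul_le_mul_of_nonneg_left h1 hq.le
        linarith
    _ = 1 := by ring_nf; exact Real.exp_zero

lemma keyB {β f g : ℝ} (hβ : 1 < β) (hf : 0 < f) (hf1 : f < 1)
    (hg : 0 ≤ g) :
    f ^ (β - 1) / (β - 1) - (f ^ β + g ^ β) / β ≤ 1 / (β * (β - 1)) := by
  have hq : 0 < β - 1 := by linarith
  have hβ0 : 0 < β := by linarith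
  have hA := keyA hq hf hf1
  have hfb : f ^ β = f ^ (β - 1) * f := by
    rw [← Real.rpow_add_one hf.ne' (β - 1)]; ring_nf
  have hkey : β * f ^ (β - 1) - (β - 1) * f ^ β ≤ 1 := by
    rw [hfb]; nlinarith [Real.rpow_nonneg hf.le (β - 1)]
  have hgb : 0 ≤ g ^ β := Real.rpow_nonneg hg β
  rw [div_sub_div _ _ hq.ne' hβ0.ne', div_le_div_iff₀ (by positivity) (by positivity)]
  nlinarith [mul_le_mul_of_nonneg_right hkey (mul_pos hβ0 hq).le,
    mul_nonneg (mul_nonneg hq.le hgb) (mul_pos hβ0 hq).le]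


/-- Logistic classification model mass function: `f(1;x,θ) = 1/(1+exp(-m(x,θ)))`,
`f(0;x,θ) = 1 - f(1;x,θ)`. -/
noncomputable def logisticF {X Θ : Type*} (m : X → Θ → ℝ) (y : Bool) (x : X) (θ : Θ) : ℝ :=
  if y then 1 / (1 + Real.exp (-(m x θ))) else 1 - 1 / (1 + Real.exp (-(m x θ)))

/-- β-divergence loss for the logistic classification model. -/
noncomputable def logisticBetaLoss {X Θ : Type*} (m : X → Θ → ℝ) (β : ℝ)
    (y : Bool) (x : X) (θ : Θ) : ℝ :=
  -(logisticF m y x θ) ^ (β - 1) / (β - 1) +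
    (1 / β) * ((logisticF m false x θ) ^ β + (logisticF m true x θ) ^ β)

/-- For the logistic model the likelihood values lie strictly between 0 and 1;
consequently the log-ratio of the unnormalized β-divergence posterior with a single
observation, under any two feature-label pairs, is bounded by `1/(β-1)`. -/
theorem logistic_betaD_bounds {X Θ : Type*} (m : X → Θ → ℝ) (β : ℝ) (hβ : 1 < β)
    (pr : Θ → ℝ) (hpr : ∀ θ, 0 < pr θ) :
    (∀ (y : Bool) (x : X) (θ : Θ), 0 < logisticF m y x θ ∧ logisticF m y x θ < 1) ∧
    (∀ (y y' : Bool) (x x' : X) (θ : Θ),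
      Real.log ((pr θ * Real.exp (-(logisticBetaLoss m β y x θ))) /
          (pr θ * Real.exp (-(logisticBetaLoss m β y' x' θ)))) ≤ 1 / (β - 1)) := by
  have hq : 0 < β - 1 := by linarith
  have hβ0 : 0 < β := by linarith
  have hbounds : ∀ (y : Bool) (x : X) (θ : Θ),
      0 < logisticF m y x θ ∧ logisticF m y x θ < 1 := by
    intro y x θ
    have hE : 0 < Real.exp (-(m x θ)) := Real.exp_pos _
    have hd : 1 < 1 + Real.exp (-(m x θ)) := by linarith
    have hp0 : 0 < 1 / (1 + Real.exp (-(m x θ))) := by positivity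
    have hp1 : 1 / (1 + Real.exp (-(m x θ))) < 1 := by
      rw [div_lt_one (by linarith)]; exact hd
    cases y <;> simp only [logisticF, if_true, if_false, Bool.false_eq_true,
      Bool.true_eq_false, ite_true, ite_false] <;> constructor <;> linarith
  refine ⟨hbounds, ?_⟩
  intro y y' x x' θ
  -- sum of the two masses is 1
  have hsum : ∀ (x : X), logisticF m false x θ + logisticF m true x θ = 1 := by
    intro x; simp [logisticF]
  -- upper bound on the loss: L' ≤ 1/β
  have hLle : ∀ (y : Bool) (x : X), logisticBetaLoss m β y x θ ≤ 1 / β := by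
    intro y x
    have h0 := hbounds false x θ
    have h1 := hbounds true x θ
    have hy := hbounds y x θ
    have ha : 0 ≤ (logisticF m y x θ) ^ (β - 1) :=
      Real.rpow_nonneg (hy.1).le _
    have hb0 : (logisticF m false x θ) ^ β ≤ logisticF m false x θ := by
      calc (logisticF m false x θ) ^ β ≤ (logisticF m false x θ) ^ (1:ℝ) :=
            Real.rpow_le_rpow_of_exponent_ge h0.1 h0.2.le (by linarith)
        _ = _ := Real.rpow_one _
    have hb1 : (logisticF m true x θ) ^ β ≤ logisticF m true x θ := by
      calc (logisticF m true x θ) ^ β ≤ (logisticF m true x θ) ^ (1:ℝ) :=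
            Real.rpow_le_rpow_of_exponent_ge h1.1 h1.2.le (by linarith)
        _ = _ := Real.rpow_one _
    have hs : (logisticF m false x θ) ^ β + (logisticF m true x θ) ^ β ≤ 1 := by
      have := hsum x; linarith
    unfold logisticBetaLoss
    have h2 : -(logisticF m y x θ) ^ (β - 1) / (β - 1) ≤ 0 := by
      apply div_nonpos_of_nonpos_of_nonneg <;> linarith
    have h3 : (1 / β) * ((logisticF m false x θ) ^ β + (logisticF m true x θ) ^ β)
        ≤ (1 / β) * 1 := by
      apply mul_le_mul_of_nonneg_left hs (by positivity)
    calc _ ≤ 0 + (1/β) * 1 := by linarith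
      _ = 1 / β := by ring
  -- lower bound on the loss: -L ≤ 1/(β(β-1))
  have hnegL : ∀ (y : Bool) (x : X), -logisticBetaLoss m β y x θ ≤ 1 / (β * (β - 1)) := by
    intro y x
    have h0 := hbounds false x θ
    have h1 := hbounds true x θ
    unfold logisticBetaLoss
    cases y
    · have := keyB hβ h0.1 h0.2 h1.1.le
      have heq : -(-(logisticF m false x θ) ^ (β - 1) / (β - 1) +
          1 / β * ((logisticF m false x θ) ^ β + (logisticF m true x θ) ^ β)) =
          (logisticF m false x θ) ^ (β - 1) / (β - 1) -
          ((logisticF m false x θ) ^ β + (logisticF m true x θ) ^ β) / β := by ring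
      rw [heq]; exact this
    · have := keyB hβ h1.1 h1.2 h0.1.le
      have heq : -(-(logisticF m true x θ) ^ (β - 1) / (β - 1) +
          1 / β * ((logisticF m false x θ) ^ β + (logisticF m true x θ) ^ β)) =
          (logisticF m true x θ) ^ (β - 1) / (β - 1) -
          ((logisticF m true x θ) ^ β + (logisticF m false x θ) ^ β) / β := by ring
      rw [heq, add_comm ((logisticF m true x θ) ^ β)]
      rw [add_comm ((logisticF m true x θ) ^ β)] at this
      exact this
  -- simplify the log-ratio
  have hlog : Real.log ((pr θ * Real.exp (-(logisticBetaLoss m β y x θ))) /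
          (pr θ * Real.exp (-(logisticBetaLoss m β y' x' θ)))) =
      -logisticBetaLoss m β y x θ + logisticBetaLoss m β y' x' θ := by
    rw [mul_div_mul_left _ _ (hpr θ).ne', ← Real.exp_sub, Real.log_exp]; ring
  rw [hlog]
  have h1 := hnegL y x
  have h2 := hLle y' x'
  have hcomb : 1 / (β * (β - 1)) + 1 / β = 1 / (β - 1) := by
    field_simp; ring
  linarith
end

section
/- For the Gaussian regression model f(y; x, θ, σ²) = N(y; m(x,θ), σ²) with σ² ≥ s² > 0, a single sample from the β-divergence generalized Bayes posterior (β > 1) is (ε, 0)-differentially private with ε = 2/((β−1)(√(2π) s)^{β−1}). -/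
open Real MeasureTheory

/-- Gaussian density with mean `μ` and variance `v`. -/
noncomputable def gaussDens (y μ v : ℝ) : ℝ :=
  (1 / Real.sqrt (2 * Real.pi * v)) * Real.exp (-(y - μ) ^ 2 / (2 * v))

/-- β-divergence loss for the Gaussian regression model with mean function `m`,
parameter `θ` and variance `v`. -/
noncomputable def gaussBetaLoss {X Θ : Type*} (m : X → Θ → ℝ) (β : ℝ)
    (d : ℝ × X) (p : Θ × ℝ) : ℝ :=
  -(gaussDens d.1 (m d.2 p.1) p.2) ^ (β - 1) / (β - 1) +
    (1 / β) * ∫ z : ℝ, (gaussDens z (m d.2 p.1) p.2) ^ β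

lemma gauss_int_shift (μ₁ μ₂ v β : ℝ) :
    ∫ z : ℝ, gaussDens z μ₁ v ^ β = ∫ z : ℝ, gaussDens z μ₂ v ^ β := by
  have h : ∀ μ0 : ℝ, ∫ z : ℝ, gaussDens z μ0 v ^ β
      = ∫ z : ℝ, ((1 / Real.sqrt (2 * Real.pi * v)) * Real.exp (-z ^ 2 / (2 * v))) ^ β := by
    intro μ0
    have := integral_sub_right_eq_self (μ := volume)
      (fun t : ℝ => ((1 / Real.sqrt (2 * Real.pi * v)) * Real.exp (-t ^ 2 / (2 * v))) ^ β) μ0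
    simpa [gaussDens] using this
  rw [h μ₁, h μ₂]

lemma gaussDens_le (y μ v s : ℝ) (hs : 0 < s) (hv : s ^ 2 ≤ v) :
    gaussDens y μ v ≤ (Real.sqrt (2 * Real.pi) * s)⁻¹ := by
  have hv0 : 0 < v := lt_of_lt_of_le (by positivity) hv
  have h1 : Real.exp (-(y - μ) ^ 2 / (2 * v)) ≤ 1 := by
    rw [Real.exp_le_one_iff]
    exact div_nonpos_of_nonpos_of_nonneg (neg_nonpos.mpr (sq_nonneg _)) (by positivity)
  have h2 : Real.sqrt (2 * Real.pi) * s ≤ Real.sqrt (2 * Real.pi * v) := by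
    have : Real.sqrt (2 * Real.pi * v) = Real.sqrt (2 * Real.pi) * Real.sqrt v := by
      rw [Real.sqrt_mul (by positivity)]
    rw [this]
    apply mul_le_mul_of_nonneg_left _ (Real.sqrt_nonneg _)
    calc s = Real.sqrt (s ^ 2) := by rw [Real.sqrt_sq hs.le]
    _ ≤ Real.sqrt v := Real.sqrt_le_sqrt hv
  have h3 : (Real.sqrt (2 * Real.pi * v))⁻¹ ≤ (Real.sqrt (2 * Real.pi) * s)⁻¹ :=
    inv_anti₀ (by positivity) h2
  calc gaussDens y μ v ≤ 1 / Real.sqrt (2 * Real.pi * v) := by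
        unfold gaussDens
        exact mul_le_of_le_one_right (by positivity) h1
  _ = (Real.sqrt (2 * Real.pi * v))⁻¹ := one_div _
  _ ≤ _ := h3

lemma loss_diff_le {X Θ : Type*} (m : X → Θ → ℝ) (β s : ℝ) (hβ : 1 < β) (hs : 0 < s)
    (d d' : ℝ × X) (p : Θ × ℝ) (hp : s ^ 2 ≤ p.2) :
    gaussBetaLoss m β d p - gaussBetaLoss m β d' p
      ≤ ((β - 1) * (Real.sqrt (2 * Real.pi) * s) ^ (β - 1))⁻¹ := by
  have hβ1 : 0 < β - 1 := by linarith
  unfold gaussBetaLoss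
  rw [gauss_int_shift (m d.2 p.1) (m d'.2 p.1) p.2 β]
  set g := gaussDens d.1 (m d.2 p.1) p.2 with hg
  set g' := gaussDens d'.1 (m d'.2 p.1) p.2 with hg'
  have hg0 : 0 ≤ g := by
    unfold g; unfold gaussDens; positivity
  have hg'0 : 0 ≤ g' := by
    unfold g'; unfold gaussDens; positivity
  have hgb : g ^ (β - 1) ≥ 0 := Real.rpow_nonneg hg0 _
  have hb0 : (0:ℝ) < Real.sqrt (2 * Real.pi) * s := by positivity
  have hgb' : g' ^ (β - 1) ≤ ((Real.sqrt (2 * Real.pi) * s) ^ (β - 1))⁻¹ := by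
    have h1 : g' ≤ (Real.sqrt (2 * Real.pi) * s)⁻¹ := gaussDens_le _ _ _ _ hs hp
    calc g' ^ (β - 1) ≤ ((Real.sqrt (2 * Real.pi) * s)⁻¹) ^ (β - 1) :=
          Real.rpow_le_rpow hg'0 h1 hβ1.le
    _ = ((Real.sqrt (2 * Real.pi) * s) ^ (β - 1))⁻¹ := Real.inv_rpow hb0.le _
  have key : -g ^ (β - 1) / (β - 1) + g' ^ (β - 1) / (β - 1)
      ≤ ((β - 1) * (Real.sqrt (2 * Real.pi) * s) ^ (β - 1))⁻¹ := by
    rw [mul_inv]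
    have h2 : g' ^ (β - 1) / (β - 1) ≤ (β - 1)⁻¹ * ((Real.sqrt (2 * Real.pi) * s) ^ (β - 1))⁻¹ := by
      rw [div_eq_inv_mul]
      exact mul_le_mul_of_nonneg_left hgb' (by positivity)
    have h3 : -g ^ (β - 1) / (β - 1) ≤ 0 := by
      apply div_nonpos_of_nonpos_of_nonneg (by linarith) hβ1.le
    linarith
  have heq : (-g ^ (β - 1) / (β - 1) + 1 / β * ∫ z : ℝ, gaussDens z (m d'.2 p.1) p.2 ^ β) -
      (-g' ^ (β - 1) / (β - 1) + 1 / β * ∫ z : ℝ, gaussDens z (m d'.2 p.1) p.2 ^ β)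
      = -g ^ (β - 1) / (β - 1) + g' ^ (β - 1) / (β - 1) := by ring
  rw [heq]
  exact key

/-- A single sample from the β-divergence generalized Bayes posterior for Gaussian
regression with variance bounded below by `s² > 0` is `(ε, 0)`-differentially private
with `ε = 2/((β-1)(√(2π) s)^(β-1))`. -/
theorem gaussian_regression_betaD_DP {X Θ : Type*} [MeasurableSpace Θ]
    (μ : Measure (Θ × ℝ)) (m : X → Θ → ℝ) (β s : ℝ) (hβ : 1 < β) (hs : 0 < s)
    (pr : Θ × ℝ → ℝ) (hπ : ∀ p, 0 ≤ pr p)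
    (hsupp : ∀ p : Θ × ℝ, p.2 < s ^ 2 → pr p = 0)
    (n : ℕ) (D D' : Fin n → ℝ × X) (j : Fin n)
    (hneq : D j ≠ D' j) (hsame : ∀ i, i ≠ j → D i = D' i)
    (hInt : ∀ E : Fin n → ℝ × X,
      Integrable (fun p => pr p * Real.exp (-(∑ i, gaussBetaLoss m β (E i) p))) μ)
    (hZD : 0 < ∫ p, pr p * Real.exp (-(∑ i, gaussBetaLoss m β (D i) p)) ∂μ)
    (hZD' : 0 < ∫ p, pr p * Real.exp (-(∑ i, gaussBetaLoss m β (D' i) p)) ∂μ) :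
    ∀ A : Set (Θ × ℝ), MeasurableSet A →
      (∫ p in A, pr p * Real.exp (-(∑ i, gaussBetaLoss m β (D i) p)) ∂μ) /
          (∫ p, pr p * Real.exp (-(∑ i, gaussBetaLoss m β (D i) p)) ∂μ) ≤
        Real.exp (2 / ((β - 1) * (Real.sqrt (2 * Real.pi) * s) ^ (β - 1))) *
          ((∫ p in A, pr p * Real.exp (-(∑ i, gaussBetaLoss m β (D' i) p)) ∂μ) /
            (∫ p, pr p * Real.exp (-(∑ i, gaussBetaLoss m β (D' i) p)) ∂μ)) := by
  intro A hA
  set c : ℝ := ((β - 1) * (Real.sqrt (2 * Real.pi) * s) ^ (β - 1))⁻¹ with hc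
  -- sum difference equals single-term difference
  have hsum : ∀ p : Θ × ℝ,
      (∑ i, gaussBetaLoss m β (D i) p) - (∑ i, gaussBetaLoss m β (D' i) p)
        = gaussBetaLoss m β (D j) p - gaussBetaLoss m β (D' j) p := by
    intro p
    rw [← Finset.sum_sub_distrib]
    rw [Finset.sum_eq_single j]
    · intro i _ hij
      rw [hsame i hij]; ring
    · intro h; exact absurd (Finset.mem_univ j) h
  -- pointwise bounds
  have hpt : ∀ (E E' : Fin n → ℝ × X),
      (∀ p : Θ × ℝ, (∑ i, gaussBetaLoss m β (E i) p) - (∑ i, gaussBetaLoss m β (E' i) p)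
        = gaussBetaLoss m β (E j) p - gaussBetaLoss m β (E' j) p) →
      ∀ p, pr p * Real.exp (-(∑ i, gaussBetaLoss m β (E' i) p))
        ≤ Real.exp c * (pr p * Real.exp (-(∑ i, gaussBetaLoss m β (E i) p))) := by
    intro E E' hEE p
    rcases lt_or_ge p.2 (s ^ 2) with h | h
    · rw [hsupp p h]; simp
    · have hd := loss_diff_le m β s hβ hs (E j) (E' j) p h
      have h1 : -(∑ i, gaussBetaLoss m β (E' i) p)
          ≤ c + -(∑ i, gaussBetaLoss m β (E i) p) := by
        have := hEE p
        rw [hc]; linarith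
      calc pr p * Real.exp (-(∑ i, gaussBetaLoss m β (E' i) p))
          ≤ pr p * (Real.exp c * Real.exp (-(∑ i, gaussBetaLoss m β (E i) p))) := by
            apply mul_le_mul_of_nonneg_left _ (hπ p)
            rw [← Real.exp_add]
            exact Real.exp_le_exp.mpr h1
      _ = Real.exp c * (pr p * Real.exp (-(∑ i, gaussBetaLoss m β (E i) p))) := by ring
  have hsum' : ∀ p : Θ × ℝ,
      (∑ i, gaussBetaLoss m β (D' i) p) - (∑ i, gaussBetaLoss m β (D i) p)
        = gaussBetaLoss m β (D' j) p - gaussBetaLoss m β (D j) p := by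
    intro p; have := hsum p; linarith
  -- numerator bound: ∫_A f_D ≤ e^c ∫_A f_D'
  have hnum : (∫ p in A, pr p * Real.exp (-(∑ i, gaussBetaLoss m β (D i) p)) ∂μ)
      ≤ Real.exp c * ∫ p in A, pr p * Real.exp (-(∑ i, gaussBetaLoss m β (D' i) p)) ∂μ := by
    rw [← integral_const_mul]
    exact integral_mono ((hInt D).restrict) (((hInt D').restrict).const_mul _)
      (hpt D' D hsum')
  -- denominator bound: Z_D' ≤ e^c Z_D
  have hden : (∫ p, pr p * Real.exp (-(∑ i, gaussBetaLoss m β (D' i) p)) ∂μ)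
      ≤ Real.exp c * ∫ p, pr p * Real.exp (-(∑ i, gaussBetaLoss m β (D i) p)) ∂μ := by
    rw [← integral_const_mul]
    exact integral_mono (hInt D') ((hInt D).const_mul _) (hpt D D' hsum)
  have hN' : 0 ≤ ∫ p in A, pr p * Real.exp (-(∑ i, gaussBetaLoss m β (D' i) p)) ∂μ := by
    apply integral_nonneg
    intro p; exact mul_nonneg (hπ p) (Real.exp_pos _).le
  have hexp2 : Real.exp (2 / ((β - 1) * (Real.sqrt (2 * Real.pi) * s) ^ (β - 1)))
      = Real.exp c * Real.exp c := by
    rw [← Real.exp_add, hc]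
    congr 1
    rw [div_eq_mul_inv]; ring
  have key2 : (∫ p in A, pr p * Real.exp (-(∑ i, gaussBetaLoss m β (D i) p)) ∂μ) *
      (∫ p, pr p * Real.exp (-(∑ i, gaussBetaLoss m β (D' i) p)) ∂μ)
      ≤ Real.exp c * Real.exp c *
        (∫ p in A, pr p * Real.exp (-(∑ i, gaussBetaLoss m β (D' i) p)) ∂μ) *
        (∫ p, pr p * Real.exp (-(∑ i, gaussBetaLoss m β (D i) p)) ∂μ) := by
    calc (∫ p in A, pr p * Real.exp (-(∑ i, gaussBetaLoss m β (D i) p)) ∂μ) *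
        (∫ p, pr p * Real.exp (-(∑ i, gaussBetaLoss m β (D' i) p)) ∂μ)
        ≤ (Real.exp c * ∫ p in A, pr p * Real.exp (-(∑ i, gaussBetaLoss m β (D' i) p)) ∂μ) *
          (Real.exp c * ∫ p, pr p * Real.exp (-(∑ i, gaussBetaLoss m β (D i) p)) ∂μ) :=
          mul_le_mul hnum hden hZD'.le (mul_nonneg (Real.exp_pos c).le hN')
    _ = _ := by ring
  rw [hexp2, ← mul_div_assoc, div_le_div_iff₀ hZD hZD']
  exact key2
end

section
/- In the Gibbs (tempered) posterior with weight w > 0 and log-likelihood bounded in absolute value by B (sup over data and parameters), one sample from π^(w)(θ|D) ∝ π(θ) exp(w Σ_i log f(D_i;θ)) is (4wB, 0)-differentially private; in particular w = ε/(4B) gives (ε, 0)-DP. -/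
open Real MeasureTheory

/-- One sample from the Gibbs (tempered) posterior
`pr^(w)(θ|D) ∝ pr(θ) exp(w ∑ᵢ log f(Dᵢ;θ))` with weight `w > 0` and log-likelihood
bounded by `B` is `(4wB, 0)`-differentially private. -/
theorem gibbs_posterior_DP {Θ 𝒟 : Type*} [MeasurableSpace Θ]
    (μ : Measure Θ) (pr : Θ → ℝ) (hpr : ∀ θ, 0 ≤ pr θ)
    (f : 𝒟 → Θ → ℝ) (B w : ℝ) (hw : 0 < w)
    (hB : ∀ (x : 𝒟) (θ : Θ), |Real.log (f x θ)| ≤ B)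
    (n : ℕ) (D D' : Fin n → 𝒟) (j : Fin n)
    (hneq : D j ≠ D' j) (hsame : ∀ i, i ≠ j → D i = D' i)
    (hInt : ∀ E : Fin n → 𝒟,
      Integrable (fun θ => pr θ * Real.exp (w * ∑ i, Real.log (f (E i) θ))) μ)
    (hZD : 0 < ∫ θ, pr θ * Real.exp (w * ∑ i, Real.log (f (D i) θ)) ∂μ)
    (hZD' : 0 < ∫ θ, pr θ * Real.exp (w * ∑ i, Real.log (f (D' i) θ)) ∂μ) :
    ∀ A : Set Θ, MeasurableSet A →
      (∫ θ in A, pr θ * Real.exp (w * ∑ i, Real.log (f (D i) θ)) ∂μ) /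
          (∫ θ, pr θ * Real.exp (w * ∑ i, Real.log (f (D i) θ)) ∂μ) ≤
        Real.exp (4 * w * B) *
          ((∫ θ in A, pr θ * Real.exp (w * ∑ i, Real.log (f (D' i) θ)) ∂μ) /
            (∫ θ, pr θ * Real.exp (w * ∑ i, Real.log (f (D' i) θ)) ∂μ)) := by
  intro A hA
  have key : ∀ E E' : Fin n → 𝒟, (∀ i, i ≠ j → E i = E' i) → ∀ θ,
      pr θ * Real.exp (w * ∑ i, Real.log (f (E i) θ)) ≤
      Real.exp (2 * w * B) * (pr θ * Real.exp (w * ∑ i, Real.log (f (E' i) θ))) := by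
    intro E E' hs θ
    have hdiff : (∑ i, Real.log (f (E i) θ)) - (∑ i, Real.log (f (E' i) θ)) =
        Real.log (f (E j) θ) - Real.log (f (E' j) θ) := by
      rw [← Finset.sum_sub_distrib, Finset.sum_eq_single j]
      · intro i _ hi; rw [hs i hi]; ring
      · intro h; exact absurd (Finset.mem_univ j) h
    have h1 := abs_le.mp (hB (E j) θ)
    have h2 := abs_le.mp (hB (E' j) θ)
    have hexp : Real.exp (w * ∑ i, Real.log (f (E i) θ)) ≤
        Real.exp (2 * w * B) * Real.exp (w * ∑ i, Real.log (f (E' i) θ)) := by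
      rw [← Real.exp_add]
      apply Real.exp_le_exp.mpr
      nlinarith [hdiff]
    calc pr θ * Real.exp (w * ∑ i, Real.log (f (E i) θ))
        ≤ pr θ * (Real.exp (2 * w * B) * Real.exp (w * ∑ i, Real.log (f (E' i) θ))) :=
          mul_le_mul_of_nonneg_left hexp (hpr θ)
      _ = Real.exp (2 * w * B) * (pr θ * Real.exp (w * ∑ i, Real.log (f (E' i) θ))) := by ring
  have hnum : (∫ θ in A, pr θ * Real.exp (w * ∑ i, Real.log (f (D i) θ)) ∂μ) ≤
      Real.exp (2 * w * B) * ∫ θ in A, pr θ * Real.exp (w * ∑ i, Real.log (f (D' i) θ)) ∂μ := by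
    rw [← integral_const_mul]
    exact integral_mono ((hInt D).restrict) (((hInt D').restrict).const_mul _)
      (key D D' hsame)
  have hden : (∫ θ, pr θ * Real.exp (w * ∑ i, Real.log (f (D' i) θ)) ∂μ) ≤
      Real.exp (2 * w * B) * ∫ θ, pr θ * Real.exp (w * ∑ i, Real.log (f (D i) θ)) ∂μ := by
    rw [← integral_const_mul]
    exact integral_mono (hInt D') ((hInt D).const_mul _)
      (key D' D (fun i hi => (hsame i hi).symm))
  have ha' : 0 ≤ ∫ θ in A, pr θ * Real.exp (w * ∑ i, Real.log (f (D' i) θ)) ∂μ :=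
    integral_nonneg fun θ => mul_nonneg (hpr θ) (Real.exp_pos _).le
  set a := ∫ θ in A, pr θ * Real.exp (w * ∑ i, Real.log (f (D i) θ)) ∂μ
  set a' := ∫ θ in A, pr θ * Real.exp (w * ∑ i, Real.log (f (D' i) θ)) ∂μ
  set Z := ∫ θ, pr θ * Real.exp (w * ∑ i, Real.log (f (D i) θ)) ∂μ
  set Z' := ∫ θ, pr θ * Real.exp (w * ∑ i, Real.log (f (D' i) θ)) ∂μ
  have ha : 0 ≤ a := integral_nonneg fun θ => mul_nonneg (hpr θ) (Real.exp_pos _).le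
  rw [mul_div_assoc', div_le_div_iff₀ hZD hZD']
  have he : Real.exp (4 * w * B) = Real.exp (2 * w * B) * Real.exp (2 * w * B) := by
    rw [← Real.exp_add]; ring_nf
  rw [he]
  nlinarith [Real.exp_pos (2 * w * B), mul_le_mul hnum hden hZD'.le
    (mul_nonneg (Real.exp_pos (2 * w * B)).le ha')]
end
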